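/- arXiv:2309.08330 — 5 statements merged into one kernel-verified Lean document; each statement's English description precedes it below -/
import Mathlib

section
/- Let F : T₁ → T₂ be a triangulated functor between triangulated categories admitting arbitrary small coproducts, and assume F has a right adjoint G. Then: (a) if G commutes with small coproducts, then F preserves compact objects; (b) if moreover T₁ is compactly generated and F preserves compact objects, then G commutes with small coproducts. -/
open CategoryTheory CategoryTheory.Limits CategoryTheory.Pretriangulated

universe v u

/-- The canonical map `⨁ᵢ Hom(A, B i) → Hom(A, ∐ B)` in a preadditive category,
sending a finitely supported family `(fᵢ)` to `∑ᵢ fᵢ ≫ ιᵢ`. -/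
noncomputable def homCoprodComparison {C : Type u} [Category.{v} C] [Preadditive C]
    {ι : Type v} (A : C) (B : ι → C) [HasCoproduct B] :
    (Π₀ i, (A ⟶ B i)) →+ (A ⟶ ∐ B) :=
  letI := Classical.decEq ι
  DFinsupp.sumAddHom fun i =>
    { toFun := fun f => f ≫ Sigma.ι B i
      map_zero' := by simp
      map_add' := fun f g => by simp [Preadditive.add_comp] }

/-- An object `A` is compact if for every small family `(B i)` the canonical map
`⨁ᵢ Hom(A, B i) → Hom(A, ∐ B)` is bijective. -/
def IsCompactObj {C : Type u} [Category.{v} C] [Preadditive C] (A : C) : Prop :=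
  ∀ ⦃ι : Type v⦄ (B : ι → C) [HasCoproduct B],
    Function.Bijective (homCoprodComparison A B)

section Aux

lemma homCoprodComparison_single {C : Type u} [Category.{v} C] [Preadditive C]
    {ι : Type v} [DecidableEq ι] (A : C) (B : ι → C) [HasCoproduct B] (i : ι) (f : A ⟶ B i) :
    homCoprodComparison A B (DFinsupp.single i f) = f ≫ Sigma.ι B i :=
  DFinsupp.sumAddHom_single _ _ _

variable {T₁ T₂ : Type u} [Category.{v} T₁] [Category.{v} T₂]
  [Preadditive T₁] [Preadditive T₂]
  (F : T₁ ⥤ T₂) [F.Additive] (G : T₂ ⥤ T₁) (adj : F ⊣ G)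

include adj

lemma adjHomEquiv_add {A : T₁} {Y : T₂} (f g : F.obj A ⟶ Y) :
    adj.homEquiv A Y (f + g) = adj.homEquiv A Y f + adj.homEquiv A Y g := by
  apply (adj.homEquiv A Y).symm.injective
  rw [Equiv.symm_apply_apply, Adjunction.homEquiv_counit, Functor.map_add,
    Preadditive.add_comp, ← Adjunction.homEquiv_counit, ← Adjunction.homEquiv_counit,
    Equiv.symm_apply_apply, Equiv.symm_apply_apply]

/-- The hom-equivalence of an adjunction between preadditive categories whose left adjoint is
additive, as an `AddEquiv`. -/
noncomputable def adjHomAddEquiv (A : T₁) (Y : T₂) : (F.obj A ⟶ Y) ≃+ (A ⟶ G.obj Y) :=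
  { adj.homEquiv A Y with map_add' := adjHomEquiv_add F G adj }

lemma adj_square {ι : Type v} (A : T₁) (X : ι → T₂) [HasCoproduct X]
    [HasCoproduct fun i => G.obj (X i)] :
    (adjHomAddEquiv F G adj A (∐ X)).toAddMonoidHom.comp (homCoprodComparison (F.obj A) X)
      = (Preadditive.rightComp A (sigmaComparison G X)).comp
          ((homCoprodComparison A fun i => G.obj (X i)).comp
            (DFinsupp.mapRange.addMonoidHom fun i =>
              (adjHomAddEquiv F G adj A (X i)).toAddMonoidHom)) := by
  classical
  refine DFinsupp.addHom_ext fun i f => ?_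
  simp only [AddMonoidHom.comp_apply, DFinsupp.mapRange.addMonoidHom_apply,
    DFinsupp.mapRange_single, homCoprodComparison_single]
  show adj.homEquiv A (∐ X) (f ≫ Sigma.ι X i)
      = (adj.homEquiv A (X i) f ≫ Sigma.ι (fun i => G.obj (X i)) i) ≫ sigmaComparison G X
  rw [Adjunction.homEquiv_naturality_right, Category.assoc, ι_comp_sigmaComparison]

lemma adj_square_fun {ι : Type v} (A : T₁) (X : ι → T₂) [HasCoproduct X]
    [HasCoproduct fun i => G.obj (X i)] :
    (fun u : A ⟶ (∐ fun i => G.obj (X i)) => u ≫ sigmaComparison G X) ∘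
      (⇑(homCoprodComparison A fun i => G.obj (X i)) ∘
        ⇑(DFinsupp.mapRange.addMonoidHom fun i =>
            (adjHomAddEquiv F G adj A (X i)).toAddMonoidHom))
      = ⇑(adjHomAddEquiv F G adj A (∐ X)).toAddMonoidHom ∘
          ⇑(homCoprodComparison (F.obj A) X) := by
  funext d
  exact (DFunLike.congr_fun (adj_square F G adj A X) d).symm

lemma mapRange_bijective {ι : Type v} (A : T₁) (X : ι → T₂) :
    Function.Bijective
      ⇑(DFinsupp.mapRange.addMonoidHom fun i =>
          (adjHomAddEquiv F G adj A (X i)).toAddMonoidHom) :=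
  (DFinsupp.mapRange.addEquiv fun i => adjHomAddEquiv F G adj A (X i)).bijective

/-- If `A` is compact for the family `G ∘ X` and `F.obj A` is compact for the family `X`,
then postcomposition with the comparison map `∐ G (X i) ⟶ G (∐ X)` is bijective on
morphisms from `A`. -/
lemma bij_postcomp_of_compacts {ι : Type v} (A : T₁) (X : ι → T₂) [HasCoproduct X]
    [HasCoproduct fun i => G.obj (X i)]
    (h1 : Function.Bijective (homCoprodComparison A fun i => G.obj (X i)))
    (h2 : Function.Bijective (homCoprodComparison (F.obj A) X)) :
    Function.Bijective
      (fun u : A ⟶ (∐ fun i => G.obj (X i)) => u ≫ sigmaComparison G X) := by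
  have he : Function.Bijective ⇑(adjHomAddEquiv F G adj A (∐ X)).toAddMonoidHom :=
    (adjHomAddEquiv F G adj A (∐ X)).bijective
  have hco := he.comp h2
  rw [← adj_square_fun F G adj A X] at hco
  exact (Function.Bijective.of_comp_iff _ (h1.comp (mapRange_bijective F G adj A X))).mp hco

/-- If the comparison map `∐ G (X i) ⟶ G (∐ X)` is an isomorphism and `A` is compact for the
family `G ∘ X`, then the canonical map `⨁ᵢ Hom(F A, X i) → Hom(F A, ∐ X)` is bijective. -/
lemma bij_homCoprodComparison_obj {ι : Type v} (A : T₁) (X : ι → T₂) [HasCoproduct X]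
    [HasCoproduct fun i => G.obj (X i)]
    (hμ : IsIso (sigmaComparison G X))
    (h1 : Function.Bijective (homCoprodComparison A fun i => G.obj (X i))) :
    Function.Bijective (homCoprodComparison (F.obj A) X) := by
  have hpost : Function.Bijective
      (fun u : A ⟶ (∐ fun i => G.obj (X i)) => u ≫ sigmaComparison G X) := by
    constructor
    · intro u v huv
      have := congrArg (· ≫ inv (sigmaComparison G X)) huv
      simpa using this
    · intro w
      exact ⟨w ≫ inv (sigmaComparison G X), by simp⟩
  have hco := hpost.comp (h1.comp (mapRange_bijective F G adj A X))
  rw [adj_square_fun F G adj A X] at hco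
  have he : Function.Bijective ⇑(adjHomAddEquiv F G adj A (∐ X)).toAddMonoidHom :=
    (adjHomAddEquiv F G adj A (∐ X)).bijective
  exact (Function.Bijective.of_comp_iff' he _).mp hco

end Aux

/-- Compact objects are stable under shifts. -/
lemma isCompactObj_shift {T : Type u} [Category.{v} T] [Preadditive T] [HasShift T ℤ]
    [∀ n : ℤ, (shiftFunctor T n).Additive] [HasCoproducts.{v} T]
    {A : T} (hA : IsCompactObj A) (n : ℤ) : IsCompactObj (A⟦n⟧) := by
  intro ι B _
  exact bij_homCoprodComparison_obj (shiftFunctor T n) (shiftFunctor T (-n))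
    (shiftEquiv T n).toAdjunction A B inferInstance (hA _)

lemma bij_postcomp_of_iso {C : Type u} [Category.{v} C] {B B' W W' : C} (e : B' ≅ B)
    (μ : W ⟶ W') (h : Function.Bijective fun u : B ⟶ W => u ≫ μ) :
    Function.Bijective fun u : B' ⟶ W => u ≫ μ := by
  constructor
  · intro u v huv
    have h1 : (e.inv ≫ u) ≫ μ = (e.inv ≫ v) ≫ μ := by
      dsimp only at huv
      rw [Category.assoc, Category.assoc, huv]
    have h2 := h.injective (a₁ := e.inv ≫ u) (a₂ := e.inv ≫ v) h1
    calc u = e.hom ≫ e.inv ≫ u := by simp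
    _ = e.hom ≫ e.inv ≫ v := by rw [h2]
    _ = v := by simp
  · intro w
    obtain ⟨u, hu⟩ := h.surjective (e.inv ≫ w)
    refine ⟨e.hom ≫ u, ?_⟩
    dsimp only at hu ⊢
    rw [Category.assoc, hu]
    simp

theorem stmt1 {T₁ T₂ : Type u} [Category.{v} T₁] [Category.{v} T₂]
    [HasZeroObject T₁] [HasZeroObject T₂] [Preadditive T₁] [Preadditive T₂]
    [HasShift T₁ ℤ] [HasShift T₂ ℤ]
    [∀ n : ℤ, (shiftFunctor T₁ n).Additive] [∀ n : ℤ, (shiftFunctor T₂ n).Additive]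
    [Pretriangulated T₁] [Pretriangulated T₂] [IsTriangulated T₁] [IsTriangulated T₂]
    [HasCoproducts.{v} T₁] [HasCoproducts.{v} T₂]
    (F : T₁ ⥤ T₂) [F.Additive] [F.CommShift ℤ] [F.IsTriangulated]
    (G : T₂ ⥤ T₁) (adj : F ⊣ G) :
    -- (a) if `G` commutes with small coproducts, then `F` preserves compact objects
    ((∀ ⦃ι : Type v⦄ (X : ι → T₂),
        IsIso (Sigma.desc (fun i => G.map (Sigma.ι X i)) :
          (∐ fun i => G.obj (X i)) ⟶ G.obj (∐ X))) →
      ∀ A : T₁, IsCompactObj A → IsCompactObj (F.obj A)) ∧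
    -- (b) if moreover `T₁` is compactly generated and `F` preserves compact objects,
    -- then `G` commutes with small coproducts
    ((∃ S : Set T₁, (∀ A ∈ S, IsCompactObj A) ∧
        ∀ B : T₁, (∀ A ∈ S, ∀ i : ℤ, ∀ f : A ⟶ B⟦i⟧, f = 0) → IsZero B) →
      (∀ A : T₁, IsCompactObj A → IsCompactObj (F.obj A)) →
      ∀ ⦃ι : Type v⦄ (X : ι → T₂),
        IsIso (Sigma.desc (fun i => G.map (Sigma.ι X i)) :
          (∐ fun i => G.obj (X i)) ⟶ G.obj (∐ X))) := by
  constructor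
  · -- part (a)
    intro hG A hA ι X _
    have hμ : IsIso (sigmaComparison G X) := hG X
    exact bij_homCoprodComparison_obj F G adj A X hμ (hA _)
  · -- part (b)
    rintro ⟨S, hSc, hSg⟩ hF ι X
    obtain ⟨Z, p, q, hT⟩ := Pretriangulated.distinguished_cocone_triangle (sigmaComparison G X)
    -- postcomposition with the comparison map is bijective on shifted generators
    have hP : ∀ A, A ∈ S → ∀ n : ℤ, Function.Bijective
        (fun u : A⟦n⟧ ⟶ (∐ fun i => G.obj (X i)) => u ≫ sigmaComparison G X) := fun A hA n =>
      bij_postcomp_of_compacts F G adj (A⟦n⟧) X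
        (isCompactObj_shift (hSc A hA) n _)
        (hF _ (isCompactObj_shift (hSc A hA) n) X)
    -- all maps from shifted generators to the cone vanish
    have hZ' : ∀ A, A ∈ S → ∀ n : ℤ, ∀ f : A⟦n⟧ ⟶ Z, f = 0 := by
      intro A hA n f
      have h31 : q ≫ (sigmaComparison G X)⟦(1 : ℤ)⟧' = 0 :=
        comp_distTriang_mor_zero₃₁ _ hT
      -- postcomposition with the shifted comparison map is injective on `A⟦n⟧`
      have hinj : Function.Injective
          (fun u : A⟦n⟧ ⟶ (∐ fun i => G.obj (X i))⟦(1 : ℤ)⟧ =>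
            u ≫ (sigmaComparison G X)⟦(1 : ℤ)⟧') := by
        intro u v huv
        have E := (shiftEquiv' T₁ (-1 : ℤ) (1 : ℤ) (by omega)).toAdjunction
        have hbij' : Function.Bijective
            (fun u : (A⟦n⟧)⟦(-1 : ℤ)⟧ ⟶ (∐ fun i => G.obj (X i)) =>
              u ≫ sigmaComparison G X) :=
          bij_postcomp_of_iso ((shiftFunctorAdd' T₁ n (-1) (n + -1) rfl).app A).symm
            (sigmaComparison G X) (hP A hA (n + -1))
        have key : (E.homEquiv _ _).symm u = (E.homEquiv _ _).symm v := by
          apply hbij'.injective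
          show (E.homEquiv _ _).symm u ≫ sigmaComparison G X
              = (E.homEquiv _ _).symm v ≫ sigmaComparison G X
          exact (E.homEquiv_naturality_right_symm u _).symm.trans
            ((congrArg (E.homEquiv _ _).symm huv).trans (E.homEquiv_naturality_right_symm v _))
        have := congrArg (E.homEquiv _ _) key
        exact (E.homEquiv _ _).symm.injective key
      have hfq : f ≫ q = 0 := by
        apply hinj
        show (f ≫ q) ≫ _ = (0 : A⟦n⟧ ⟶ _) ≫ _
        rw [Category.assoc, h31, comp_zero, zero_comp]
      obtain ⟨w, hw⟩ := Triangle.coyoneda_exact₃ _ hT f hfq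
      obtain ⟨w', hw'⟩ := (hP A hA n).surjective w
      dsimp only at hw'
      have h12 : sigmaComparison G X ≫ p = 0 := comp_distTriang_mor_zero₁₂ _ hT
      rw [hw, ← hw']
      show (w' ≫ sigmaComparison G X) ≫ p = 0
      rw [Category.assoc]
      show w' ≫ sigmaComparison G X ≫ p = 0
      rw [h12, comp_zero]
    -- hence all maps `A ⟶ Z⟦i⟧` vanish
    have hZ : ∀ A ∈ S, ∀ i : ℤ, ∀ f : A ⟶ Z⟦i⟧, f = 0 := by
      intro A hA i f
      have E := (shiftEquiv' T₁ (-i) i (by omega)).toAdjunction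
      have hf : f = E.homEquiv A Z ((E.homEquiv A Z).symm f) :=
        (Equiv.apply_symm_apply _ _).symm
      rw [hf, hZ' A hA (-i) ((E.homEquiv A Z).symm f)]
      exact (E.homEquiv_unit A Z 0).trans (by rw [Functor.map_zero, comp_zero]; rfl)
    have hZ0 : IsZero Z := hSg Z hZ
    have : IsIso (sigmaComparison G X) :=
      (Triangle.isZero₃_iff_isIso₁ _ hT).1 hZ0
    exact this
end

section
/- Let S and T be triangulated categories with arbitrary small coproducts, and let F : S → T be a functor admitting a right adjoint G. Assume that G commutes with the shift functors (G(X⟦1⟧) is naturally isomorphic to (G X)⟦1⟧), that G commutes with small coproducts, and that G reflects zero objects (if G X is a zero object then X is a zero object). If U is a compact generator of S, then F(U) is a compact generator of T. -/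
open CategoryTheory CategoryTheory.Limits CategoryTheory.Pretriangulated

universe v u

theorem stmt4 {S T : Type u} [Category.{v} S] [Category.{v} T]
    [HasZeroObject S] [HasZeroObject T] [Preadditive S] [Preadditive T]
    [HasShift S ℤ] [HasShift T ℤ]
    [∀ n : ℤ, (shiftFunctor S n).Additive] [∀ n : ℤ, (shiftFunctor T n).Additive]
    [Pretriangulated S] [Pretriangulated T] [IsTriangulated S] [IsTriangulated T]
    [HasCoproducts.{v} S] [HasCoproducts.{v} T]
    (F : S ⥤ T) (G : T ⥤ S) (adj : F ⊣ G)
    -- `G` commutes with the shift functors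
    (e : ∀ n : ℤ, shiftFunctor T n ⋙ G ≅ G ⋙ shiftFunctor S n)
    -- `G` commutes with small coproducts
    (hG : ∀ ⦃ι : Type v⦄ (X : ι → T),
      IsIso (Sigma.desc (fun i => G.map (Sigma.ι X i)) :
        (∐ fun i => G.obj (X i)) ⟶ G.obj (∐ X)))
    -- `G` reflects zero objects
    (hGzero : ∀ X : T, IsZero (G.obj X) → IsZero X)
    -- `U` is a compact generator of `S`
    (U : S) (hUcpt : IsCompactObj U)
    (hUgen : ∀ X : S, (∀ i : ℤ, ∀ f : U ⟶ X⟦i⟧, f = 0) → IsZero X) :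
    IsCompactObj (F.obj U) ∧
      ∀ X : T, (∀ i : ℤ, ∀ f : F.obj U ⟶ X⟦i⟧, f = 0) → IsZero X := by
  classical
  -- `G` is additive
  have hBS : HasBinaryBiproducts S := HasBinaryBiproducts.of_hasBinaryCoproducts
  have hBT : HasBinaryBiproducts T := HasBinaryBiproducts.of_hasBinaryCoproducts
  have hlim := adj.rightAdjoint_preservesLimits
  have hzero : G.PreservesZeroMorphisms := by infer_instance
  have hGadd : G.Additive := by
    have := preservesBinaryBiproducts_of_preservesBinaryProducts G
    exact Functor.additive_of_preservesBinaryBiproducts G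
  -- the adjunction hom-equivalence, as an additive equivalence
  let eqv : ∀ Y : T, (F.obj U ⟶ Y) ≃+ (U ⟶ G.obj Y) := fun Y =>
    { adj.homEquiv U Y with
      map_add' := fun f g => by
        simp [Adjunction.homEquiv_unit, Functor.map_add, Preadditive.comp_add] }
  constructor
  · -- compactness
    intro ι X _
    set d : (∐ fun i => G.obj (X i)) ⟶ G.obj (∐ X) :=
      Sigma.desc (fun i => G.map (Sigma.ι X i)) with hd
    have hdIso : IsIso d := hG X
    have key : ∀ w : Π₀ i, (F.obj U ⟶ X i),
        (eqv (∐ X)) (homCoprodComparison (F.obj U) X w) =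
          homCoprodComparison U (fun i => G.obj (X i))
            (DFinsupp.mapRange.addEquiv (fun i => eqv (X i)) w) ≫ d := by
      intro w
      have := DFinsupp.addHom_ext (β := fun i => (F.obj U ⟶ X i))
        (f := ((eqv (∐ X)).toAddMonoidHom.comp (homCoprodComparison (F.obj U) X)))
        (g := (AddMonoidHom.mk' (fun g => g ≫ d) (fun a b => by
            simp [Preadditive.add_comp])).comp
          ((homCoprodComparison U (fun i => G.obj (X i))).comp
            (DFinsupp.mapRange.addEquiv (fun i => eqv (X i))).toAddMonoidHom))
        (fun i f => by
          simp only [AddMonoidHom.coe_comp, Function.comp_apply, AddEquiv.coe_toAddMonoidHom,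
            DFinsupp.mapRange.addEquiv_apply]
          rw [DFinsupp.mapRange_single]
          rw [homCoprodComparison_single, homCoprodComparison_single]
          have hL : ∀ (Y : T) (h : F.obj U ⟶ Y), (eqv Y) h = (adj.homEquiv U Y) h :=
            fun _ _ => rfl
          show _ = ((eqv (X i)) f ≫ Sigma.ι (fun i => G.obj (X i)) i) ≫ d
          rw [hL, hL, adj.homEquiv_naturality_right]
          simp [hd])
      exact DFunLike.congr_fun this w
    have hbij : Function.Bijective
        (fun w => (eqv (∐ X)) (homCoprodComparison (F.obj U) X w)) := by
      have : (fun w => (eqv (∐ X)) (homCoprodComparison (F.obj U) X w)) =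
          (fun g => g ≫ d) ∘ (homCoprodComparison U (fun i => G.obj (X i))) ∘
            (DFinsupp.mapRange.addEquiv (fun i => eqv (X i))) := by
        funext w; exact key w
      rw [this]
      refine Function.Bijective.comp ?_ (Function.Bijective.comp (hUcpt _)
        (DFinsupp.mapRange.addEquiv (fun i => eqv (X i))).bijective)
      · constructor
        · intro a b h
          have := congrArg (fun g => g ≫ inv d) h
          simpa using this
        · intro g
          exact ⟨g ≫ inv d, by simp⟩
    have := Function.Bijective.comp (eqv (∐ X)).symm.bijective hbij
    simpa [Function.comp_def] using this
  · -- generation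
    intro X hX
    refine hGzero X (hUgen (G.obj X) fun i g => ?_)
    have h0 : (adj.homEquiv U (X⟦i⟧)).symm (g ≫ (e i).inv.app X) = 0 := hX i _
    have : g ≫ (e i).inv.app X = (adj.homEquiv U (X⟦i⟧)) 0 := by
      rw [← h0, Equiv.apply_symm_apply]
    rw [Adjunction.homEquiv_unit] at this
    simp only [Functor.map_zero, Limits.comp_zero] at this
    have h2 := congrArg (fun u => u ≫ (e i).hom.app X) this
    simpa using h2
end

section
/- Let T be a triangulated category and let A and B be strictly full triangulated subcategories of T whose inclusion functors admit right adjoints. Assume that Hom(b, a) = 0 for all a ∈ A and b ∈ B, and that every object X of T satisfying Hom(a, X) = 0 and Hom(b, X) = 0 for all a ∈ A and b ∈ B is a zero object. Then T admits the semi-orthogonal decomposition T = ⟨A, B⟩: every object X of T fits into a distinguished triangle X_B → X → X_A → X_B⟦1⟧ with X_A ∈ A and X_B ∈ B. -/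
open CategoryTheory CategoryTheory.Limits CategoryTheory.Pretriangulated

universe v u

theorem stmt5 {T : Type u} [Category.{v} T]
    [HasZeroObject T] [Preadditive T] [HasShift T ℤ]
    [∀ n : ℤ, (shiftFunctor T n).Additive] [Pretriangulated T] [IsTriangulated T]
    (P Q : T → Prop)
    -- `P` and `Q` define strictly full triangulated subcategories:
    (hPiso : ∀ {X Y : T}, (X ≅ Y) → P X → P Y)
    (hPshift : ∀ (X : T) (n : ℤ), P X → P (X⟦n⟧))
    (hPcone : ∀ (Tr : Triangle T), Tr ∈ (distTriang T) → P Tr.obj₁ → P Tr.obj₂ → P Tr.obj₃)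
    (hQiso : ∀ {X Y : T}, (X ≅ Y) → Q X → Q Y)
    (hQshift : ∀ (X : T) (n : ℤ), Q X → Q (X⟦n⟧))
    (hQcone : ∀ (Tr : Triangle T), Tr ∈ (distTriang T) → Q Tr.obj₁ → Q Tr.obj₂ → Q Tr.obj₃)
    -- the inclusion functors admit right adjoints
    (hPadj : (ObjectProperty.ι P).IsLeftAdjoint)
    (hQadj : (ObjectProperty.ι Q).IsLeftAdjoint)
    -- `Hom(b, a) = 0` for all `a ∈ P` and `b ∈ Q`
    (horth : ∀ (a b : T), P a → Q b → ∀ f : b ⟶ a, f = 0)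
    -- joint generation: an object right orthogonal to both `P` and `Q` is zero
    (hgen : ∀ X : T, (∀ a : T, P a → ∀ f : a ⟶ X, f = 0) →
      (∀ b : T, Q b → ∀ f : b ⟶ X, f = 0) → IsZero X) :
    -- conclusion: every object fits into a distinguished triangle `X_B ⟶ X ⟶ X_A ⟶ X_B⟦1⟧`
    ∀ X : T, ∃ (XA XB : T) (f : XB ⟶ X) (g : X ⟶ XA) (h : XA ⟶ XB⟦(1 : ℤ)⟧),
      P XA ∧ Q XB ∧ Triangle.mk f g h ∈ distTriang T := by
  have key : ∀ (R : T → Prop), (∀ (X : T) (n : ℤ), R X → R (X⟦n⟧)) →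
      (ObjectProperty.ι R).IsLeftAdjoint →
      ∀ X : T, ∃ (B C : T) (ε : B ⟶ X) (g : X ⟶ C) (h : C ⟶ B⟦(1 : ℤ)⟧),
        R B ∧ ((Triangle.mk ε g h ∈ distTriang T) ∧ (∀ b, R b → ∀ f : b ⟶ C, f = 0)) := by
    intro R hRshift hadj X
    obtain ⟨G, ⟨adj⟩⟩ := hadj.exists_rightAdjoint
    set B : T := (G.obj X).obj with hBdef
    have hB : R B := (G.obj X).property
    set ε : B ⟶ X := adj.counit.app X with hεdef
    have hsurj : ∀ (b : T), R b → ∀ f : b ⟶ X, ∃ w : b ⟶ B, w ≫ ε = f := by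
      intro b hb f
      have h1 := (adj.homEquiv ⟨b, hb⟩ X).symm_apply_apply f
      rw [adj.homEquiv_counit] at h1
      exact ⟨(adj.homEquiv ⟨b, hb⟩ X f).hom, h1⟩
    have hinj : ∀ (b : T), R b → ∀ w : b ⟶ B, w ≫ ε = 0 → w = 0 := by
      intro b hb w hw
      let w' : (⟨b, hb⟩ : ObjectProperty.FullSubcategory R) ⟶ G.obj X := ObjectProperty.homMk w
      have h0 : (adj.homEquiv ⟨b, hb⟩ X).symm w' = 0 := by
        rw [adj.homEquiv_counit]; exact hw
      have h0' : (adj.homEquiv ⟨b, hb⟩ X).symm 0 = 0 := by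
        rw [adj.homEquiv_counit, Functor.map_zero, zero_comp]
      have h2 := (adj.homEquiv ⟨b, hb⟩ X).symm.injective (h0.trans h0'.symm)
      simpa [w'] using congrArg (ObjectProperty.ι R).map h2
    obtain ⟨C, g, h, hT⟩ := Pretriangulated.distinguished_cocone_triangle ε
    refine ⟨B, C, ε, g, h, hB, hT, ?_⟩
    intro b hb f
    have e : ((b⟦(-1 : ℤ)⟧)⟦(1 : ℤ)⟧ : T) ≅ b :=
      (shiftFunctorCompIsoId T (-1 : ℤ) (1 : ℤ) (by ring)).app b
    obtain ⟨w, hw⟩ := (shiftFunctor T (1 : ℤ)).map_surjective (e.hom ≫ f ≫ h)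
    have hw0 : w ≫ ε = 0 := by
      apply (shiftFunctor T (1 : ℤ)).map_injective
      rw [Functor.map_comp, hw, Functor.map_zero]
      have := Pretriangulated.comp_distTriang_mor_zero₃₁ _ hT
      change h ≫ (shiftFunctor T 1).map ε = 0 at this
      simp only [Category.assoc, this, comp_zero]
    have hw' : w = 0 := hinj _ (hRshift b (-1) hb) w hw0
    have hfh : f ≫ h = 0 := by
      have : e.inv ≫ e.hom ≫ f ≫ h = e.inv ≫ (shiftFunctor T (1 : ℤ)).map w := by
        rw [hw]
      rw [hw', Functor.map_zero, comp_zero, e.inv_hom_id_assoc] at this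
      exact this
    obtain ⟨v, hv⟩ := Pretriangulated.Triangle.coyoneda_exact₃ _ hT f hfh
    obtain ⟨u, hu⟩ := hsurj b hb v
    have := Pretriangulated.comp_distTriang_mor_zero₁₂ _ hT
    change ε ≫ g = 0 at this
    change f = (v : b ⟶ X) ≫ g at hv
    rw [hv, ← hu]
    exact (Category.assoc u ε g).trans (by rw [this, comp_zero])
  intro X
  obtain ⟨B, C, ε, g, h, hB, hT, horthQ⟩ := key Q hQshift hQadj X
  obtain ⟨A, D, ε', g', h', hA, hT', horthP⟩ := key P hPshift hPadj C
  have hQD : ∀ b, Q b → ∀ f : b ⟶ D, f = 0 := by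
    intro b hb f
    have h1 : f ≫ h' = 0 := horth _ _ (hPshift A 1 hA) hb _
    obtain ⟨v, hv⟩ := Pretriangulated.Triangle.coyoneda_exact₃ _ hT' f h1
    rw [hv, horthQ b hb v]; exact zero_comp
  have hD : IsZero D := hgen D horthP hQD
  have hiso : IsIso ε' := (Pretriangulated.Triangle.isZero₃_iff_isIso₁ _ hT').1 hD
  have hC : P C := hPiso (asIso ε') hA
  exact ⟨C, B, ε, g, h, hC, hB, hT⟩
end

section
/- Let α : B → A be a homomorphism of commutative rings, let n ≥ 1 and d ≥ 1 be integers, and let F_B : ℤ → Ideal(B) and F_A : ℤ → Ideal(A) be length-n multiplicative filtrations by ideals, i.e. F(i) is the unit ideal for i ≥ 0, F(i) ⊆ F(i+1) for all i, F(i)·F(j) ⊆ F(i+j) for all i, j, and F(−n) = 0; assume that α maps F_B(i) into F_A(i) for all i ∈ ℤ. Let I_B ⊆ B and I_A ⊆ A be ideals with I_B^d ⊆ F_B(−1), I_A^d ⊆ F_A(−1), and such that α maps I_B into I_A. Then there exist length-dn multiplicative filtrations by ideals G_B : ℤ → Ideal(B) and G_A : ℤ → Ideal(A) (satisfying the same axioms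 with dn in place of n) such that G_B(d·i) = F_B(i) and G_A(d·i) = F_A(i) for all i ∈ ℤ, and α maps G_B(i) into G_A(i) for all i ∈ ℤ. Moreover, if additionally F_B(−1) ⊆ I_B and F_A(−1) ⊆ I_A, then G_B and G_A can be chosen so that G_B(−1) = I_B and G_A(−1) = I_A. -/
/-- A length-`n` multiplicative filtration by ideals on a commutative ring `R`:
`F i` is the unit ideal for `i ≥ 0`, the filtration is ascending and multiplicative,
and `F (-n) = 0`. -/
def IsIdealFiltration {R : Type*} [CommRing R] (n : ℕ) (F : ℤ → Ideal R) : Prop :=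
  (∀ i : ℤ, 0 ≤ i → F i = ⊤) ∧ (∀ i : ℤ, F i ≤ F (i + 1)) ∧
    (∀ i j : ℤ, F i * F j ≤ F (i + j)) ∧ F (-(n : ℤ)) = ⊥

section Aux

variable {R : Type*} [CommRing R]

lemma IsIdealFiltration.mono {n : ℕ} {F : ℤ → Ideal R} (hF : IsIdealFiltration n F) :
    Monotone F := by
  intro i j hij
  obtain ⟨k, rfl⟩ := Int.le.dest hij
  clear hij
  induction k with
  | zero => simp
  | succ m ih =>
      calc F i ≤ F (i + m) := ih
        _ ≤ F (i + m + 1) := hF.2.1 _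
        _ = F (i + (m + 1 : ℕ)) := by congr 1; push_cast; ring

lemma IsIdealFiltration.pow_neg_one_mul {n : ℕ} {F : ℤ → Ideal R}
    (hF : IsIdealFiltration n F) (q : ℕ) (j : ℤ) : F (-1) ^ q * F j ≤ F (j - q) := by
  induction q with
  | zero => simp
  | succ m ih =>
      have h : F (-1) ^ (m + 1) * F j = F (-1) * (F (-1) ^ m * F j) := by ring
      rw [h]
      calc F (-1) * (F (-1) ^ m * F j) ≤ F (-1) * F (j - m) :=
            Ideal.mul_mono_right ih
        _ ≤ F (-1 + (j - m)) := hF.2.2.1 _ _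
        _ = F (j - (m + 1 : ℕ)) := by congr 1; push_cast; ring

/-- The `d`-refinement of `F` attached to an ideal `I`. -/
def refineF (d : ℕ) (I : Ideal R) (F : ℤ → Ideal R) (i : ℤ) : Ideal R :=
  ⨆ p : ℕ × ℤ, ⨆ _ : (d : ℤ) * p.2 - p.1 ≤ i, I ^ p.1 * F p.2

lemma le_refineF {d : ℕ} {I : Ideal R} {F : ℤ → Ideal R} {i : ℤ} {a : ℕ} {j : ℤ}
    (h : (d : ℤ) * j - a ≤ i) : I ^ a * F j ≤ refineF d I F i := by
  refine le_trans ?_ (le_iSup _ (a, j))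
  exact le_iSup (fun _ : (d : ℤ) * j - a ≤ i => I ^ a * F j) h

lemma refineF_le {d : ℕ} {I : Ideal R} {F : ℤ → Ideal R} {i : ℤ} {J : Ideal R}
    (h : ∀ (a : ℕ) (j : ℤ), (d : ℤ) * j - a ≤ i → I ^ a * F j ≤ J) :
    refineF d I F i ≤ J :=
  iSup_le fun p => iSup_le fun hp => h p.1 p.2 hp

/-- Key estimate: reduce `I ^ a * F j` writing `a = d * q + r`. -/
lemma key_le {n d : ℕ} {I : Ideal R} {F : ℤ → Ideal R} (hF : IsIdealFiltration n F)
    (hI : I ^ d ≤ F (-1)) (a : ℕ) (j : ℤ) :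
    I ^ a * F j ≤ I ^ (a % d) * F (j - (a / d : ℕ)) := by
  calc I ^ a * F j = (I ^ d) ^ (a / d) * I ^ (a % d) * F j := by
        rw [← pow_mul, ← pow_add, Nat.div_add_mod]
    _ = I ^ (a % d) * ((I ^ d) ^ (a / d) * F j) := by ring
    _ ≤ I ^ (a % d) * (F (-1) ^ (a / d) * F j) :=
        Ideal.mul_mono_right (Ideal.mul_mono_left (Ideal.pow_right_mono hI _))
    _ ≤ I ^ (a % d) * F (j - (a / d : ℕ)) :=
        Ideal.mul_mono_right (hF.pow_neg_one_mul _ _)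

lemma refineF_main {n d : ℕ} {I : Ideal R} {F : ℤ → Ideal R}
    (hF : IsIdealFiltration n F) (hn : 1 ≤ n) (hd : 1 ≤ d)
    (hI : I ^ d ≤ F (-1)) (hFI : F (-1) ≤ I) :
    IsIdealFiltration (d * n) (refineF d I F) ∧
      (∀ i : ℤ, refineF d I F ((d : ℤ) * i) = F i) ∧ refineF d I F (-1) = I := by
  have hdpos : (0 : ℤ) < d := by exact_mod_cast hd
  have hmod : ∀ a : ℕ, ((a % d : ℕ) : ℤ) < d := by
    intro a; exact_mod_cast Nat.mod_lt a (by omega)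
  have hdiv : ∀ a : ℕ, (d : ℤ) * ((a / d : ℕ) : ℤ) + ((a % d : ℕ) : ℤ) = a := by
    intro a; exact_mod_cast Nat.div_add_mod a d
  -- G (d i) = F i
  have hrefl : ∀ i : ℤ, refineF d I F ((d : ℤ) * i) = F i := by
    intro i
    apply le_antisymm
    · refine refineF_le fun a j hle => ?_
      refine le_trans (key_le hF hI a j) ?_
      have h1 : (d : ℤ) * (j - ((a / d : ℕ) : ℤ)) < (d : ℤ) * (i + 1) := by
        rw [mul_sub, mul_add]
        have := hmod a; have := hdiv a
        linarith
      have hj : j - ((a / d : ℕ) : ℤ) ≤ i := by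
        have := lt_of_mul_lt_mul_left h1 (le_of_lt hdpos)
        omega
      calc I ^ (a % d) * F (j - ((a / d : ℕ) : ℤ)) ≤ F (j - ((a / d : ℕ) : ℤ)) :=
            Ideal.mul_le_right
        _ ≤ F i := hF.mono hj
    · have h := le_refineF (d := d) (I := I) (F := F) (i := (d : ℤ) * i) (a := 0) (j := i)
        (by simp)
      simpa using h
  have htop : ∀ i : ℤ, 0 ≤ i → refineF d I F i = ⊤ := by
    intro i hi
    have h := le_refineF (d := d) (I := I) (F := F) (i := i) (a := 0) (j := 0)
      (by simpa using hi)
    rw [hF.1 0 le_rfl] at h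
    exact top_le_iff.mp (by simpa using h)
  have hstep : ∀ i : ℤ, refineF d I F i ≤ refineF d I F (i + 1) := by
    intro i
    exact refineF_le fun a j hle => le_refineF (by linarith)
  have hmul : ∀ i j : ℤ, refineF d I F i * refineF d I F j ≤ refineF d I F (i + j) := by
    intro i j
    have expand : ∀ k : ℤ, refineF d I F k =
        ⨆ p : ℕ × ℤ, ⨆ _ : (d : ℤ) * p.2 - p.1 ≤ k, I ^ p.1 * F p.2 := fun _ => rfl
    rw [expand i, expand j, Submodule.iSup_mul]
    refine iSup_le fun p => ?_
    rw [Submodule.iSup_mul]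
    refine iSup_le fun hp => ?_
    rw [Submodule.mul_iSup]
    refine iSup_le fun q => ?_
    rw [Submodule.mul_iSup]
    refine iSup_le fun hq => ?_
    have h : I ^ p.1 * F p.2 * (I ^ q.1 * F q.2) = I ^ (p.1 + q.1) * (F p.2 * F q.2) := by
      rw [pow_add]; ring
    rw [h]
    calc I ^ (p.1 + q.1) * (F p.2 * F q.2) ≤ I ^ (p.1 + q.1) * F (p.2 + q.2) :=
          Ideal.mul_mono_right (hF.2.2.1 _ _)
      _ ≤ refineF d I F (i + j) := le_refineF (by push_cast; rw [mul_add]; linarith)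
  have hbot : refineF d I F (-((d * n : ℕ) : ℤ)) = ⊥ := by
    rw [eq_bot_iff]
    refine refineF_le fun a j hle => ?_
    refine le_trans (key_le hF hI a j) ?_
    have hdn : ((d * n : ℕ) : ℤ) = (d : ℤ) * n := by push_cast; ring
    have h1 : (d : ℤ) * (j - ((a / d : ℕ) : ℤ)) < (d : ℤ) * (-(n : ℤ) + 1) := by
      rw [mul_sub, mul_add]
      have := hmod a; have := hdiv a
      rw [hdn] at hle
      linarith
    have hj : j - ((a / d : ℕ) : ℤ) ≤ -(n : ℤ) := by
      have := lt_of_mul_lt_mul_left h1 (le_of_lt hdpos)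
      omega
    calc I ^ (a % d) * F (j - ((a / d : ℕ) : ℤ)) ≤ F (j - ((a / d : ℕ) : ℤ)) :=
          Ideal.mul_le_right
      _ ≤ F (-(n : ℤ)) := hF.mono hj
      _ = ⊥ := hF.2.2.2
  have hneg : refineF d I F (-1) = I := by
    apply le_antisymm
    · refine refineF_le fun a j hle => ?_
      refine le_trans (key_le hF hI a j) ?_
      have h1 : (d : ℤ) * (j - ((a / d : ℕ) : ℤ)) < (d : ℤ) * (0 + 1) := by
        rw [mul_sub, mul_add]
        have := hmod a; have := hdiv a
        linarith
      have hj0 : j - ((a / d : ℕ) : ℤ) ≤ 0 := by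
        have := lt_of_mul_lt_mul_left h1 (le_of_lt hdpos)
        omega
      rcases lt_or_eq_of_le hj0 with hlt | heq
      · calc I ^ (a % d) * F (j - ((a / d : ℕ) : ℤ)) ≤ F (j - ((a / d : ℕ) : ℤ)) :=
              Ideal.mul_le_right
          _ ≤ F (-1) := hF.mono (by omega)
          _ ≤ I := hFI
      · have hr : a % d ≠ 0 := by
          intro h0
          have h0' : ((a % d : ℕ) : ℤ) = 0 := by exact_mod_cast h0
          have hj' : j = ((a / d : ℕ) : ℤ) := by omega
          rw [hj'] at hle
          have := hdiv a
          linarith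
        calc I ^ (a % d) * F (j - ((a / d : ℕ) : ℤ)) ≤ I ^ (a % d) := Ideal.mul_le_left
          _ ≤ I := Ideal.pow_le_self hr
    · have h := le_refineF (d := d) (I := I) (F := F) (i := -1) (a := 1) (j := 0) (by simp)
      rw [hF.1 0 le_rfl] at h
      simpa using h
  exact ⟨⟨htop, hstep, hmul, hbot⟩, hrefl, hneg⟩

lemma refineF_map {R S : Type*} [CommRing R] [CommRing S] (α : R →+* S)
    {d : ℕ} {I : Ideal R} {F : ℤ → Ideal R} {I' : Ideal S} {F' : ℤ → Ideal S}
    (hI : Ideal.map α I ≤ I') (hF : ∀ j : ℤ, Ideal.map α (F j) ≤ F' j) (i : ℤ) :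
    Ideal.map α (refineF d I F i) ≤ refineF d I' F' i := by
  rw [refineF, (Ideal.gc_map_comap α).l_iSup]
  refine iSup_le fun p => ?_
  rw [(Ideal.gc_map_comap α).l_iSup]
  refine iSup_le fun hp => ?_
  rw [Ideal.map_mul, Ideal.map_pow]
  calc Ideal.map α I ^ p.1 * Ideal.map α (F p.2)
      ≤ I' ^ p.1 * F' p.2 := Ideal.mul_mono (Ideal.pow_right_mono hI _) (hF p.2)
    _ ≤ refineF d I' F' i := le_refineF hp

end Aux

theorem stmt8 {B A : Type*} [CommRing B] [CommRing A] (α : B →+* A)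
    (n d : ℕ) (hn : 1 ≤ n) (hd : 1 ≤ d)
    (FB : ℤ → Ideal B) (FA : ℤ → Ideal A)
    (hFB : IsIdealFiltration n FB) (hFA : IsIdealFiltration n FA)
    (hα : ∀ (i : ℤ), ∀ x ∈ FB i, α x ∈ FA i)
    (IB : Ideal B) (IA : Ideal A)
    (hIB : IB ^ d ≤ FB (-1)) (hIA : IA ^ d ≤ FA (-1))
    (hαI : ∀ x ∈ IB, α x ∈ IA) :
    (∃ (GB : ℤ → Ideal B) (GA : ℤ → Ideal A),
      IsIdealFiltration (d * n) GB ∧ IsIdealFiltration (d * n) GA ∧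
      (∀ i : ℤ, GB ((d : ℤ) * i) = FB i) ∧ (∀ i : ℤ, GA ((d : ℤ) * i) = FA i) ∧
      (∀ (i : ℤ), ∀ x ∈ GB i, α x ∈ GA i)) ∧
    (FB (-1) ≤ IB → FA (-1) ≤ IA →
      ∃ (GB : ℤ → Ideal B) (GA : ℤ → Ideal A),
        IsIdealFiltration (d * n) GB ∧ IsIdealFiltration (d * n) GA ∧
        (∀ i : ℤ, GB ((d : ℤ) * i) = FB i) ∧ (∀ i : ℤ, GA ((d : ℤ) * i) = FA i) ∧
        (∀ (i : ℤ), ∀ x ∈ GB i, α x ∈ GA i) ∧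
        GB (-1) = IB ∧ GA (-1) = IA) := by
  have hmapF : ∀ j : ℤ, Ideal.map α (FB j) ≤ FA j := fun j =>
    Ideal.map_le_iff_le_comap.mpr fun x hx => hα j x hx
  constructor
  · -- first part: refine using I := F(-1)
    have hIB' : FB (-1) ^ d ≤ FB (-1) := Ideal.pow_le_self (by omega)
    have hIA' : FA (-1) ^ d ≤ FA (-1) := Ideal.pow_le_self (by omega)
    obtain ⟨h1, h2, -⟩ := refineF_main hFB hn hd hIB' le_rfl
    obtain ⟨h1', h2', -⟩ := refineF_main hFA hn hd hIA' le_rfl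
    refine ⟨refineF d (FB (-1)) FB, refineF d (FA (-1)) FA, h1, h1', h2, h2', ?_⟩
    intro i x hx
    exact refineF_map α (hmapF (-1)) hmapF i (Ideal.mem_map_of_mem α hx)
  · intro hFBI hFAI
    obtain ⟨h1, h2, h3⟩ := refineF_main hFB hn hd hIB hFBI
    obtain ⟨h1', h2', h3'⟩ := refineF_main hFA hn hd hIA hFAI
    refine ⟨refineF d IB FB, refineF d IA FA, h1, h1', h2, h2', ?_, h3, h3'⟩
    intro i x hx
    exact refineF_map α (Ideal.map_le_iff_le_comap.mpr fun y hy => hαI y hy) hmapF i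
      (Ideal.mem_map_of_mem α hx)
end

section
/- Let R be a commutative ring, let n ≥ 1 and d ≥ 1 be integers, let F : ℤ → Ideal(R) be a length-n multiplicative filtration by ideals (F(i) is the unit ideal for i ≥ 0, F(i) ⊆ F(i+1) for all i, F(i)·F(j) ⊆ F(i+j) for all i, j, and F(−n) = 0), and let I be an ideal of R with I^d ⊆ F(−1). Define G : ℤ → Ideal(R) by G(i) = R for i ≥ 0 and, for i < 0, writing i = j·d − r with the unique integers j ≤ 0 and 0 ≤ r < d, G(i) = F(j)·I^r + F(j−1). Then G is a length-dn multiplicative filtration by ideals (G(i) is the unit ideal for i ≥ 0, G is ascending, G(i)·G(j) ⊆ G(i+j) for all i, j, and G(−dn) = 0), and G(d·i) = F(i) for all i ∈ ℤ. Moreover, if F(−1) ⊆ I, then G(−1) = I. -/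
theorem stmt9 {R : Type*} [CommRing R] (n d : ℕ) (hn : 1 ≤ n) (hd : 1 ≤ d)
    (F : ℤ → Ideal R)
    (hFtop : ∀ i : ℤ, 0 ≤ i → F i = ⊤)
    (hFmono : ∀ i : ℤ, F i ≤ F (i + 1))
    (hFmul : ∀ i j : ℤ, F i * F j ≤ F (i + j))
    (hFbot : F (-(n : ℤ)) = ⊥)
    (I : Ideal R) (hI : I ^ d ≤ F (-1))
    (G : ℤ → Ideal R)
    -- `G i = R` for `i ≥ 0`
    (hGtop : ∀ i : ℤ, 0 ≤ i → G i = ⊤)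
    -- for `i < 0`, writing `i = j * d - r` with the unique `j ≤ 0` and `0 ≤ r < d`,
    -- we have `G i = F j * I ^ r + F (j - 1)`
    (hGneg : ∀ i : ℤ, i < 0 → ∀ (j : ℤ) (r : ℕ), j ≤ 0 → (r : ℤ) < (d : ℤ) →
      i = j * (d : ℤ) - (r : ℤ) → G i = F j * I ^ r + F (j - 1)) :
    -- `G` is a length-`d * n` multiplicative filtration by ideals
    ((∀ i : ℤ, 0 ≤ i → G i = ⊤) ∧ (∀ i : ℤ, G i ≤ G (i + 1)) ∧
      (∀ i j : ℤ, G i * G j ≤ G (i + j)) ∧ G (-((d * n : ℕ) : ℤ)) = ⊥) ∧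
    -- `G` is a `d`-refinement of `F`
    (∀ i : ℤ, G ((d : ℤ) * i) = F i) ∧
    -- moreover, if `F (-1) ⊆ I`, then `G (-1) = I`
    (F (-1) ≤ I → G (-1) = I) := by
  have hd0 : (0:ℤ) < (d:ℤ) := by exact_mod_cast hd
  -- F is monotone
  have Fle : ∀ a b : ℤ, a ≤ b → F a ≤ F b := fun a b hab =>
    Int.le_induction (motive := fun b _ => F a ≤ F b) le_rfl (fun k _ ih => ih.trans (hFmono k)) b hab
  have Fbot : ∀ a : ℤ, a ≤ -(n:ℤ) → F a = ⊥ := fun a ha =>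
    le_bot_iff.mp (hFbot ▸ Fle a (-(n:ℤ)) ha)
  -- canonical decomposition of negative integers
  have rep : ∀ i : ℤ, i < 0 → ∃ (j : ℤ) (r : ℕ), j ≤ 0 ∧ (r:ℤ) < (d:ℤ) ∧
      i = j * (d:ℤ) - (r:ℤ) := by
    intro i hi
    have h2 : 0 ≤ (-i) % (d:ℤ) := Int.emod_nonneg _ (by omega)
    have h1 : (-i) % (d:ℤ) < (d:ℤ) := Int.emod_lt_of_pos _ hd0
    have h3 : 0 ≤ (-i) / (d:ℤ) := Int.ediv_nonneg (by omega) hd0.le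
    refine ⟨-((-i) / (d:ℤ)), ((-i) % (d:ℤ)).toNat, by omega, by omega, ?_⟩
    have h4 : (((-i) % (d:ℤ)).toNat : ℤ) = (-i) % (d:ℤ) := Int.toNat_of_nonneg h2
    rw [h4]
    linear_combination Int.mul_ediv_add_emod (-i) (d:ℤ)
  -- G increases by one step
  have Gstep : ∀ i : ℤ, G i ≤ G (i + 1) := by
    intro i
    rcases le_or_gt 0 (i+1) with h | h
    · rw [hGtop _ h]; exact le_top
    · obtain ⟨j, r, hj, hr, hi⟩ := rep i (by omega)
      rw [hGneg i (by omega) j r hj hr hi]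
      rcases Nat.eq_zero_or_pos r with hr0 | hr0
      · subst hr0
        have hjneg : j < 0 := by
          rcases lt_or_eq_of_le hj with h' | h'
          · exact h'
          · exfalso; subst h'; simp at hi; omega
        have heq : i + 1 = (j+1) * (d:ℤ) - ((d-1 : ℕ) : ℤ) := by
          have : ((d-1:ℕ):ℤ) = (d:ℤ) - 1 := by omega
          rw [this]; push_cast at hi ⊢; linear_combination hi
        rw [hGneg (i+1) h (j+1) (d-1) (by omega) (by omega) heq]
        simp only [pow_zero, mul_one, Submodule.add_eq_sup]
        have h1 : F j ≤ F (j+1) * I^(d-1) ⊔ F (j+1-1) := by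
          have : j + 1 - 1 = j := by ring
          rw [this]; exact le_sup_right
        exact sup_le h1 ((Fle _ _ (by omega)).trans h1)
      · have heq : i + 1 = j * (d:ℤ) - ((r-1 : ℕ) : ℤ) := by
          have : ((r-1:ℕ):ℤ) = (r:ℤ) - 1 := by omega
          rw [this]; linear_combination hi
        rw [hGneg (i+1) h j (r-1) hj (by omega) heq]
        simp only [Submodule.add_eq_sup]
        exact sup_le (le_sup_of_le_left
          (Ideal.mul_mono_right (Ideal.pow_le_pow_right (by omega)))) le_sup_right
  have Gle : ∀ a b : ℤ, a ≤ b → G a ≤ G b := fun a b hab =>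
    Int.le_induction (motive := fun b _ => G a ≤ G b) le_rfl (fun k _ ih => ih.trans (Gstep k)) b hab
  -- value at multiples of d
  have Grefine : ∀ i : ℤ, G ((d:ℤ) * i) = F i := by
    intro i
    rcases le_or_gt 0 i with h | h
    · rw [hGtop _ (by positivity), hFtop _ h]
    · have hdi : (d:ℤ) * i < 0 := mul_neg_of_pos_of_neg hd0 h
      rw [hGneg _ hdi i 0 h.le (by omega) (by push_cast; ring)]
      simp only [pow_zero, mul_one, Submodule.add_eq_sup]
      exact sup_eq_left.mpr (Fle _ _ (by omega))
  refine ⟨⟨hGtop, Gstep, ?_, ?_⟩, Grefine, ?_⟩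
  · -- multiplicativity
    intro i j
    rcases le_or_gt 0 i with hi | hi
    · rw [hGtop i hi, Ideal.top_mul]; exact Gle _ _ (by omega)
    rcases le_or_gt 0 j with hj | hj
    · rw [hGtop j hj, Ideal.mul_top]; exact Gle _ _ (by omega)
    obtain ⟨a, r, ha, hr, hia⟩ := rep i hi
    obtain ⟨b, s, hb, hs, hjb⟩ := rep j hj
    rw [hGneg i hi a r ha hr hia, hGneg j hj b s hb hs hjb]
    have hij : i + j < 0 := by omega
    have expand : (F a * I^r + F (a-1)) * (F b * I^s + F (b-1)) =
        F a * F b * (I^r * I^s) + (F a * F (b-1)) * I^r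
          + (F (a-1) * F b) * I^s + F (a-1) * F (b-1) := by ring
    rw [expand]
    rcases lt_or_ge ((r:ℤ) + (s:ℤ)) (d:ℤ) with hcase | hcase
    · rw [hGneg (i+j) hij (a+b) (r+s) (by omega) (by omega)
        (by push_cast; linear_combination hia + hjb)]
      simp only [Submodule.add_eq_sup]
      have t1 : F a * F b * (I^r * I^s) ≤ F (a+b) * I^(r+s) := by
        rw [← pow_add]; exact Ideal.mul_mono_left (hFmul a b)
      have t2 : (F a * F (b-1)) * I^r ≤ F (a+b-1) :=
        Ideal.mul_le_left.trans ((hFmul a (b-1)).trans (Fle _ _ (by omega)))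
      have t3 : (F (a-1) * F b) * I^s ≤ F (a+b-1) :=
        Ideal.mul_le_left.trans ((hFmul (a-1) b).trans (Fle _ _ (by omega)))
      have t4 : F (a-1) * F (b-1) ≤ F (a+b-1) :=
        (hFmul (a-1) (b-1)).trans (Fle _ _ (by omega))
      exact sup_le (sup_le (sup_le (le_sup_of_le_left t1) (le_sup_of_le_right t2))
        (le_sup_of_le_right t3)) (le_sup_of_le_right t4)
    · rw [hGneg (i+j) hij (a+b-1) (r+s-d) (by omega) (by omega)
        (by have hc : ((r+s-d:ℕ):ℤ) = (r:ℤ)+(s:ℤ)-(d:ℤ) := by omega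
            rw [hc]; linear_combination hia + hjb)]
      simp only [Submodule.add_eq_sup]
      have t1 : F a * F b * (I^r * I^s) ≤ F (a+b-1) * I^(r+s-d) := by
        have epow : (I:Ideal R)^r * I^s = I^d * I^(r+s-d) := by
          rw [← pow_add, ← pow_add]; congr 1; omega
        rw [epow, ← mul_assoc]
        calc F a * F b * I^d * I^(r+s-d)
            ≤ F (a+b) * F (-1) * I^(r+s-d) :=
              Ideal.mul_mono_left (Ideal.mul_mono (hFmul a b) hI)
          _ ≤ F (a+b-1) * I^(r+s-d) :=
              Ideal.mul_mono_left ((hFmul (a+b) (-1)).trans (Fle _ _ (by omega)))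
      have t2 : (F a * F (b-1)) * I^r ≤ F (a+b-1) * I^(r+s-d) := by
        have epow : (I:Ideal R)^r = I^(r+s-d) * I^(d-s) := by
          rw [← pow_add]; congr 1; omega
        rw [epow, ← mul_assoc]
        calc F a * F (b-1) * I^(r+s-d) * I^(d-s)
            ≤ F a * F (b-1) * I^(r+s-d) := Ideal.mul_le_left
          _ ≤ F (a+b-1) * I^(r+s-d) :=
              Ideal.mul_mono_left ((hFmul a (b-1)).trans (Fle _ _ (by omega)))
      have t3 : (F (a-1) * F b) * I^s ≤ F (a+b-1) * I^(r+s-d) := by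
        have epow : (I:Ideal R)^s = I^(r+s-d) * I^(d-r) := by
          rw [← pow_add]; congr 1; omega
        rw [epow, ← mul_assoc]
        calc F (a-1) * F b * I^(r+s-d) * I^(d-r)
            ≤ F (a-1) * F b * I^(r+s-d) := Ideal.mul_le_left
          _ ≤ F (a+b-1) * I^(r+s-d) :=
              Ideal.mul_mono_left ((hFmul (a-1) b).trans (Fle _ _ (by omega)))
      have t4 : F (a-1) * F (b-1) ≤ F (a+b-1-1) :=
        (hFmul (a-1) (b-1)).trans (Fle _ _ (by omega))
      exact sup_le (sup_le (sup_le (le_sup_of_le_left t1)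
        (le_sup_of_le_left t2))
        (le_sup_of_le_left t3)) (le_sup_of_le_right t4)
  · -- G (-(d*n)) = ⊥
    have hdn : (0:ℤ) < ((d*n : ℕ) : ℤ) := by positivity
    rw [hGneg _ (by omega) (-(n:ℤ)) 0 (by omega) (by omega) (by push_cast; ring)]
    simp only [pow_zero, mul_one, Submodule.add_eq_sup, hFbot]
    rw [Fbot (-(n:ℤ)-1) (by omega)]
    simp
  · -- G (-1) = I when F (-1) ≤ I
    intro hFI
    rcases Nat.lt_or_ge d 2 with h2 | h2
    · have hd1 : d = 1 := by omega
      subst hd1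
      rw [hGneg (-1) (by omega) (-1) 0 (by omega) (by omega) (by omega)]
      simp only [pow_zero, mul_one, Submodule.add_eq_sup]
      rw [sup_eq_left.mpr (Fle (-1-1) (-1) (by omega))]
      exact le_antisymm hFI (by simpa using hI)
    · rw [hGneg (-1) (by omega) 0 1 le_rfl (by omega) (by push_cast; ring)]
      rw [hFtop 0 le_rfl, pow_one, Ideal.top_mul]
      simp only [Submodule.add_eq_sup]
      have h01 : (0:ℤ) - 1 = -1 := by norm_num
      rw [h01, sup_eq_left.mpr hFI]
end
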